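/- Let B, C, D be random vectors and let W be the Moore–Penrose inverse of Var(D). If Cov_D(B,C) = 0 (adjusted orthogonality of B and C given D), then Cov(B,C) = Cov(B,D)·W·Cov(D,C). -/

import Mathlib

open MeasureTheory Matrix
set_option linter.unusedSectionVars false

variable {Ω : Type*}

/-- The covariance matrix of two random vectors `B` (dimension `m`) and `D` (dimension `n`):
the `(i,j)` entry is `E[Bᵢ·Dⱼ] − E[Bᵢ]·E[Dⱼ]`. -/
noncomputable def cov [MeasurableSpace Ω] (μ : Measure Ω) {m n : ℕ}
    (B : Fin m → Ω → ℝ) (D : Fin n → Ω → ℝ) : Matrix (Fin m) (Fin n) ℝ :=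
  Matrix.of fun i j =>
    (∫ ω, B i ω * D j ω ∂μ) - (∫ ω, B i ω ∂μ) * (∫ ω, D j ω ∂μ)

/-- `W` is a Moore–Penrose inverse of `V`. -/
def IsMoorePenrose {m n : ℕ} (V : Matrix (Fin m) (Fin n) ℝ)
    (W : Matrix (Fin n) (Fin m) ℝ) : Prop :=
  V * W * V = V ∧ W * V * W = W ∧ (V * W)ᵀ = V * W ∧ (W * V)ᵀ = W * V

/-- The adjusted expectation `E_D(B)` (computed with the matrix `W`, intended to be the
Moore–Penrose inverse of `Var(D)`): the `i`-th component is
`E[Bᵢ] + Σ_j (Cov(B,D)·W)_{ij}·(Dⱼ − E[Dⱼ])`. -/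
noncomputable def adjExp [MeasurableSpace Ω] (μ : Measure Ω) {m n : ℕ}
    (B : Fin m → Ω → ℝ) (D : Fin n → Ω → ℝ)
    (W : Matrix (Fin n) (Fin n) ℝ) : Fin m → Ω → ℝ :=
  fun i ω => (∫ ω', B i ω' ∂μ) + ∑ j, (cov μ B D * W) i j * (D j ω - ∫ ω', D j ω' ∂μ)

/-- The adjusted covariance `Cov_D(B,C) = Cov(B − E_D(B), C − E_D(C))`. -/
noncomputable def adjCov [MeasurableSpace Ω] (μ : Measure Ω) {m p n : ℕ}
    (B : Fin m → Ω → ℝ) (C : Fin p → Ω → ℝ) (D : Fin n → Ω → ℝ)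
    (W : Matrix (Fin n) (Fin n) ℝ) : Matrix (Fin m) (Fin p) ℝ :=
  cov μ (fun i ω => B i ω - adjExp μ B D W i ω) (fun j ω => C j ω - adjExp μ C D W j ω)

section Aux

variable [MeasurableSpace Ω] {μ : Measure Ω} [IsProbabilityMeasure μ]

noncomputable def covfn (μ : Measure Ω) (f g : Ω → ℝ) : ℝ :=
  (∫ ω, f ω * g ω ∂μ) - (∫ ω, f ω ∂μ) * (∫ ω, g ω ∂μ)

lemma cov_apply' {m n : ℕ} (B : Fin m → Ω → ℝ) (D : Fin n → Ω → ℝ) (i : Fin m) (j : Fin n) :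
    cov μ B D i j = covfn μ (B i) (D j) := rfl

lemma intmul {f g : Ω → ℝ} (hf : MemLp f 2 μ) (hg : MemLp g 2 μ) :
    Integrable (fun ω => f ω * g ω) μ := by
  have h := hg.smul (φ := f) (r := 1) hf (hpqr := ⟨by simp [ENNReal.inv_two_add_inv_two]⟩)
  rw [memLp_one_iff_integrable] at h
  exact h

lemma int1 {f : Ω → ℝ} (hf : MemLp f 2 μ) : Integrable f μ := hf.integrable one_le_two

lemma covfn_comm (f g : Ω → ℝ) : covfn μ f g = covfn μ g f := by
  unfold covfn
  rw [show (∫ ω, f ω * g ω ∂μ) = ∫ ω, g ω * f ω ∂μ from by simp [mul_comm]]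
  ring

lemma covfn_const_left (c : ℝ) (g : Ω → ℝ) : covfn μ (fun _ => c) g = 0 := by
  simp [covfn, integral_const_mul]

lemma covfn_const_mul_left (c : ℝ) (f g : Ω → ℝ) :
    covfn μ (fun ω => c * f ω) g = c * covfn μ f g := by
  simp only [covfn, mul_assoc, integral_const_mul]
  ring

lemma covfn_sub_left {f g h : Ω → ℝ}
    (hf : MemLp f 2 μ) (hg : MemLp g 2 μ) (hh : MemLp h 2 μ) :
    covfn μ (fun ω => f ω - g ω) h = covfn μ f h - covfn μ g h := by
  have h1 : (∫ ω, (f ω - g ω) * h ω ∂μ)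
      = (∫ ω, f ω * h ω ∂μ) - ∫ ω, g ω * h ω ∂μ := by
    simp_rw [sub_mul]
    exact integral_sub (intmul hf hh) (intmul hg hh)
  have h2 : (∫ ω, (f ω - g ω) ∂μ) = (∫ ω, f ω ∂μ) - ∫ ω, g ω ∂μ :=
    integral_sub (int1 hf) (int1 hg)
  simp only [covfn, h1, h2]; ring

lemma covfn_add_left {f g h : Ω → ℝ}
    (hf : MemLp f 2 μ) (hg : MemLp g 2 μ) (hh : MemLp h 2 μ) :
    covfn μ (fun ω => f ω + g ω) h = covfn μ f h + covfn μ g h := by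
  have h1 : (∫ ω, (f ω + g ω) * h ω ∂μ)
      = (∫ ω, f ω * h ω ∂μ) + ∫ ω, g ω * h ω ∂μ := by
    simp_rw [add_mul]
    exact integral_add (intmul hf hh) (intmul hg hh)
  have h2 : (∫ ω, (f ω + g ω) ∂μ) = (∫ ω, f ω ∂μ) + ∫ ω, g ω ∂μ :=
    integral_add (int1 hf) (int1 hg)
  simp only [covfn, h1, h2]; ring

lemma covfn_sub_right {f g h : Ω → ℝ}
    (hf : MemLp f 2 μ) (hg : MemLp g 2 μ) (hh : MemLp h 2 μ) :
    covfn μ f (fun ω => g ω - h ω) = covfn μ f g - covfn μ f h := by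
  rw [covfn_comm, covfn_sub_left hg hh hf, covfn_comm g f, covfn_comm h f]

lemma covfn_sum_left {n : ℕ} (a : Fin n → ℝ) (D : Fin n → Ω → ℝ) (h : Ω → ℝ)
    (hD : ∀ j, MemLp (D j) 2 μ) (hh : MemLp h 2 μ) :
    covfn μ (fun ω => ∑ j, a j * D j ω) h = ∑ j, a j * covfn μ (D j) h := by
  have h1 : (∫ ω, (∑ j, a j * D j ω) * h ω ∂μ) = ∑ j, a j * ∫ ω, D j ω * h ω ∂μ := by
    simp_rw [Finset.sum_mul, mul_assoc]
    rw [integral_finset_sum _ fun j _ => (intmul (hD j) hh).const_mul _]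
    simp_rw [integral_const_mul]
  have h2 : (∫ ω, (∑ j, a j * D j ω) ∂μ) = ∑ j, a j * ∫ ω, D j ω ∂μ := by
    rw [integral_finset_sum _ fun j _ => (int1 (hD j)).const_mul _]
    simp_rw [integral_const_mul]
  unfold covfn
  rw [h1, h2, Finset.sum_mul, ← Finset.sum_sub_distrib]
  exact Finset.sum_congr rfl fun j _ => by ring

lemma covfn_sum_right {n : ℕ} (a : Fin n → ℝ) (D : Fin n → Ω → ℝ) (h : Ω → ℝ)
    (hD : ∀ j, MemLp (D j) 2 μ) (hh : MemLp h 2 μ) :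
    covfn μ h (fun ω => ∑ j, a j * D j ω) = ∑ j, a j * covfn μ h (D j) := by
  rw [covfn_comm, covfn_sum_left a D h hD hh]
  exact Finset.sum_congr rfl fun j _ => by rw [covfn_comm]

lemma covfn_sub_const_left {f : Ω → ℝ} (c : ℝ) (g : Ω → ℝ)
    (hf : MemLp f 2 μ) (hg : MemLp g 2 μ) :
    covfn μ (fun ω => f ω - c) g = covfn μ f g := by
  rw [covfn_sub_left hf (memLp_const c) hg, covfn_const_left, sub_zero]

lemma covfn_sub_const_right {g : Ω → ℝ} (c : ℝ) (f : Ω → ℝ)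
    (hf : MemLp f 2 μ) (hg : MemLp g 2 μ) :
    covfn μ f (fun ω => g ω - c) = covfn μ f g := by
  rw [covfn_comm, covfn_sub_const_left c f hg hf, covfn_comm]

lemma covfn_add_right {f g h : Ω → ℝ}
    (hf : MemLp f 2 μ) (hg : MemLp g 2 μ) (hh : MemLp h 2 μ) :
    covfn μ f (fun ω => g ω + h ω) = covfn μ f g + covfn μ f h := by
  rw [covfn_comm, covfn_add_left hg hh hf, covfn_comm g f, covfn_comm h f]

lemma covfn_const_mul_right (c : ℝ) (f g : Ω → ℝ) :
    covfn μ f (fun ω => c * g ω) = c * covfn μ f g := by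
  rw [covfn_comm, covfn_const_mul_left, covfn_comm g f]

lemma covfn_self_nonneg (f : Ω → ℝ) (hf : MemLp f 2 μ) : 0 ≤ covfn μ f f := by
  set c := ∫ ω, f ω ∂μ with hc
  have h1 : ∀ ω, (f ω - c)^2 = (f ω * f ω - (2*c)*f ω) + c^2 := fun ω => by ring
  have ha : Integrable (fun ω => f ω * f ω - (2*c)*f ω) μ :=
    (intmul hf hf).sub ((int1 hf).const_mul _)
  have h2 : (∫ ω, (f ω - c)^2 ∂μ) = covfn μ f f := by
    simp_rw [h1]
    rw [integral_add ha (integrable_const _),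
      integral_sub (intmul hf hf) ((int1 hf).const_mul _), integral_const_mul,
      integral_const]
    simp only [measure_univ, probReal_univ, ENNReal.toReal_one, smul_eq_mul, one_mul, covfn, ← hc]
    ring
  rw [← h2]
  exact integral_nonneg fun ω => sq_nonneg _

lemma covfn_eq_zero {f g : Ω → ℝ} (hf : MemLp f 2 μ) (hg : MemLp g 2 μ)
    (hgg : covfn μ g g = 0) : covfn μ f g = 0 := by
  by_contra hne
  set A := covfn μ f f with hA
  set X := covfn μ f g with hX
  have key : ∀ t : ℝ, 0 ≤ A + 2*t*X := by
    intro t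
    have htg : MemLp (fun ω => t * g ω) 2 μ := hg.const_mul t
    have h1 : MemLp (fun ω => f ω + t * g ω) 2 μ := hf.add htg
    have h2 := covfn_self_nonneg _ h1
    rw [covfn_add_left hf htg h1, covfn_add_right hf hf htg,
      covfn_add_right htg hf htg, covfn_const_mul_left, covfn_const_mul_left,
      covfn_const_mul_right, covfn_const_mul_right, hgg, covfn_comm g f] at h2
    calc (0:ℝ) ≤ _ := h2
    _ = A + 2*t*X := by rw [← hA, ← hX]; ring
  have ht := key (-(A+1)/(2*X))
  have h3 : 2 * (-(A+1)/(2*X)) * X = -(A+1) := by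
    have : (2:ℝ) * X ≠ 0 := by
      intro h
      exact hne (by linarith)
    field_simp
  rw [h3] at ht
  linarith

lemma covfn_expand {n : ℕ} (f g : Ω → ℝ) (hf : MemLp f 2 μ) (hg : MemLp g 2 μ)
    (D : Fin n → Ω → ℝ) (hD : ∀ j, MemLp (D j) 2 μ) (a b : Fin n → ℝ) :
    covfn μ (fun ω => f ω - ∑ j, a j * D j ω) (fun ω => g ω - ∑ j, b j * D j ω)
      = covfn μ f g - ∑ l, b l * covfn μ f (D l) - ∑ j, a j * covfn μ (D j) g
        + ∑ j, a j * ∑ l, b l * covfn μ (D j) (D l) := by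
  have hS : MemLp (fun ω => ∑ j, a j * D j ω) 2 μ :=
    memLp_finset_sum _ fun j _ => (hD j).const_mul _
  have hT : MemLp (fun ω => ∑ j, b j * D j ω) 2 μ :=
    memLp_finset_sum _ fun j _ => (hD j).const_mul _
  have hgT : MemLp (fun ω => g ω - ∑ j, b j * D j ω) 2 μ := hg.sub hT
  rw [covfn_sub_left hf hS hgT, covfn_sub_right hf hg hT,
    covfn_sum_right b D f hD hf, covfn_sum_left a D _ hD hgT]
  have h1 : ∀ j, covfn μ (D j) (fun ω => g ω - ∑ l, b l * D l ω)
      = covfn μ (D j) g - ∑ l, b l * covfn μ (D j) (D l) := fun j => by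
    rw [covfn_sub_right (hD j) hg hT, covfn_sum_right b D (D j) hD (hD j)]
  simp_rw [h1, mul_sub, Finset.sum_sub_distrib]
  ring

lemma covBD_mulVec_zero {m n : ℕ} (B : Fin m → Ω → ℝ) (D : Fin n → Ω → ℝ)
    (hB : ∀ i, MemLp (B i) 2 μ) (hD : ∀ j, MemLp (D j) 2 μ)
    (x : Fin n → ℝ) (hx : cov μ D D *ᵥ x = 0) : cov μ B D *ᵥ x = 0 := by
  have hS : MemLp (fun ω => ∑ j, x j * D j ω) 2 μ :=
    memLp_finset_sum _ fun j _ => (hD j).const_mul _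
  have hVx : ∀ j, covfn μ (D j) (fun ω => ∑ l, x l * D l ω) = 0 := by
    intro j
    rw [covfn_sum_right x D (D j) hD (hD j)]
    have h := congrFun hx j
    simp only [Matrix.mulVec, dotProduct, Pi.zero_apply] at h
    rw [← h]
    exact Finset.sum_congr rfl fun l _ => by rw [cov_apply', mul_comm]
  have hSS : covfn μ (fun ω => ∑ j, x j * D j ω) (fun ω => ∑ l, x l * D l ω) = 0 := by
    rw [covfn_sum_left x D _ hD hS]
    exact Finset.sum_eq_zero fun j _ => by rw [hVx j, mul_zero]
  funext i
  have hBi : covfn μ (B i) (fun ω => ∑ l, x l * D l ω) = 0 :=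
    covfn_eq_zero (hB i) hS hSS
  simp only [Matrix.mulVec, dotProduct, Pi.zero_apply]
  rw [covfn_sum_right x D (B i) hD (hB i)] at hBi
  rw [← hBi]
  exact Finset.sum_congr rfl fun l _ => by rw [cov_apply', mul_comm]
lemma KWV_eq {m n : ℕ} (K : Matrix (Fin m) (Fin n) ℝ) (V W : Matrix (Fin n) (Fin n) ℝ)
    (h1 : V * W * V = V) (hker : ∀ x, V *ᵥ x = 0 → K *ᵥ x = 0) :
    K * W * V = K := by
  ext i j
  have hx : V *ᵥ ((W * V) *ᵥ Pi.single j 1 - Pi.single j 1) = 0 := by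
    rw [Matrix.mulVec_sub, Matrix.mulVec_mulVec, ← Matrix.mul_assoc, h1, sub_self]
  have h2 := hker _ hx
  rw [Matrix.mulVec_sub, sub_eq_zero, Matrix.mulVec_mulVec, ← Matrix.mul_assoc] at h2
  have h3 := congrFun h2 i
  simpa using h3

end Aux

section Aux2

variable [MeasurableSpace Ω] {μ : Measure Ω} [IsProbabilityMeasure μ]

lemma cov_transpose {m n : ℕ} (B : Fin m → Ω → ℝ) (D : Fin n → Ω → ℝ) :
    (cov μ B D)ᵀ = cov μ D B := by
  ext i j
  simp [cov, Matrix.transpose_apply, mul_comm]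

lemma adjCov_eq {m p n : ℕ} (B : Fin m → Ω → ℝ) (C : Fin p → Ω → ℝ) (D : Fin n → Ω → ℝ)
    (hB : ∀ i, MemLp (B i) 2 μ) (hC : ∀ i, MemLp (C i) 2 μ) (hD : ∀ i, MemLp (D i) 2 μ)
    (W : Matrix (Fin n) (Fin n) ℝ) :
    adjCov μ B C D W = cov μ B C - cov μ B D * (cov μ C D * W)ᵀ
      - (cov μ B D * W) * cov μ D C
      + (cov μ B D * W) * cov μ D D * (cov μ C D * W)ᵀ := by
  ext i k
  have hfi : (fun ω => B i ω - adjExp μ B D W i ω)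
      = fun ω => (B i ω - ∑ j, (cov μ B D * W) i j * D j ω)
        - ((∫ ω', B i ω' ∂μ) - ∑ j, (cov μ B D * W) i j * (∫ ω', D j ω' ∂μ)) := by
    funext ω
    simp only [adjExp, mul_sub, Finset.sum_sub_distrib]
    ring
  have hgk : (fun ω => C k ω - adjExp μ C D W k ω)
      = fun ω => (C k ω - ∑ j, (cov μ C D * W) k j * D j ω)
        - ((∫ ω', C k ω' ∂μ) - ∑ j, (cov μ C D * W) k j * (∫ ω', D j ω' ∂μ)) := by
    funext ω
    simp only [adjExp, mul_sub, Finset.sum_sub_distrib]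
    ring
  have hS : MemLp (fun ω => ∑ j, (cov μ B D * W) i j * D j ω) 2 μ :=
    memLp_finset_sum _ fun j _ => (hD j).const_mul _
  have hT : MemLp (fun ω => ∑ j, (cov μ C D * W) k j * D j ω) 2 μ :=
    memLp_finset_sum _ fun j _ => (hD j).const_mul _
  have hF : MemLp (fun ω => B i ω - ∑ j, (cov μ B D * W) i j * D j ω) 2 μ :=
    (hB i).sub hS
  have hG : MemLp (fun ω => C k ω - ∑ j, (cov μ C D * W) k j * D j ω) 2 μ :=
    (hC k).sub hT
  show covfn μ (fun ω => B i ω - adjExp μ B D W i ω)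
      (fun ω => C k ω - adjExp μ C D W k ω) = _
  have hG' : MemLp (fun ω => (C k ω - ∑ j, (cov μ C D * W) k j * D j ω)
      - ((∫ ω', C k ω' ∂μ) - ∑ j, (cov μ C D * W) k j * (∫ ω', D j ω' ∂μ))) 2 μ :=
    hG.sub (memLp_const _)
  rw [hfi, hgk, covfn_sub_const_left _ _ hF hG',
    covfn_sub_const_right _ _ hF hG,
    covfn_expand (B i) (C k) (hB i) (hC k) D hD _ _]
  have e2 : ∑ l, (cov μ C D * W) k l * covfn μ (B i) (D l)
      = (cov μ B D * (cov μ C D * W)ᵀ) i k := by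
    rw [Matrix.mul_apply]
    exact Finset.sum_congr rfl fun l _ => by
      rw [Matrix.transpose_apply, cov_apply', mul_comm]
  have e3 : ∑ j, (cov μ B D * W) i j * covfn μ (D j) (C k)
      = ((cov μ B D * W) * cov μ D C) i k := by
    rw [Matrix.mul_apply]
    exact Finset.sum_congr rfl fun j _ => by rw [cov_apply']
  have e4 : ∑ j, (cov μ B D * W) i j * ∑ l, (cov μ C D * W) k l * covfn μ (D j) (D l)
      = ((cov μ B D * W) * cov μ D D * (cov μ C D * W)ᵀ) i k := by
    have h5 : ((cov μ B D * W) * cov μ D D * (cov μ C D * W)ᵀ) i k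
        = ∑ l, ∑ j, (cov μ B D * W) i j * cov μ D D j l * (cov μ C D * W) k l := by
      rw [Matrix.mul_apply]
      exact Finset.sum_congr rfl fun l _ => by
        rw [Matrix.transpose_apply, Matrix.mul_apply, Finset.sum_mul]
    rw [h5, Finset.sum_comm]
    refine Finset.sum_congr rfl fun j _ => ?_
    rw [Finset.mul_sum]
    exact Finset.sum_congr rfl fun l _ => by rw [cov_apply' D D j l]; ring
  rw [e2, e3, e4, ← cov_apply' B C i k]
  simp only [Matrix.sub_apply, Matrix.add_apply]

end Aux2

/-- Lemma 2 of the paper: if `Cov_D(B,C) = 0` then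
`Cov(B,C) = Cov(B,D)·W·Cov(D,C)`, where `W` is the Moore–Penrose inverse of `Var(D)`. -/
theorem cov_eq_of_adjOrth [MeasurableSpace Ω] (μ : Measure Ω) [IsProbabilityMeasure μ]
    {m p n : ℕ} (B : Fin m → Ω → ℝ) (C : Fin p → Ω → ℝ) (D : Fin n → Ω → ℝ)
    (hB : ∀ i, Measurable (B i) ∧ MemLp (B i) 2 μ)
    (hC : ∀ i, Measurable (C i) ∧ MemLp (C i) 2 μ)
    (hD : ∀ i, Measurable (D i) ∧ MemLp (D i) 2 μ)
    (W : Matrix (Fin n) (Fin n) ℝ) (hW : IsMoorePenrose (cov μ D D) W)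
    (horth : adjCov μ B C D W = 0) :
    cov μ B C = cov μ B D * W * cov μ D C := by
  have hB2 : ∀ i, MemLp (B i) 2 μ := fun i => (hB i).2
  have hC2 : ∀ i, MemLp (C i) 2 μ := fun i => (hC i).2
  have hD2 : ∀ i, MemLp (D i) 2 μ := fun i => (hD i).2
  rw [adjCov_eq B C D hB2 hC2 hD2 W] at horth
  have hker : ∀ x, cov μ D D *ᵥ x = 0 → cov μ B D *ᵥ x = 0 :=
    covBD_mulVec_zero B D hB2 hD2
  have hKWV : cov μ B D * W * cov μ D D = cov μ B D :=
    KWV_eq _ _ _ hW.1 hker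
  rw [hKWV] at horth
  have h2 : cov μ B C - cov μ B D * W * cov μ D C = 0 := by
    rw [← horth]; abel
  exact sub_eq_zero.mp h2
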